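/- Let ρ(u) = √(u(4−u))/(2πu) for u ∈ (0,4] (the Marchenko–Pastur density). For every L > 0 and every t > 0, ∫₀⁴ max( L·ρ(u) − t/(2π), 0 ) du = (2L/π)·arctan(L/t); equivalently it equals L − (2L/π)·arctan(t/L). -/

import Mathlib

open MeasureTheory Real

/-- The Marchenko–Pastur density `ρ(u) = √(u(4−u))/(2πu)` on `(0, 4]`. -/
noncomputable def rhoMP (u : ℝ) : ℝ :=
  Real.sqrt (u * (4 - u)) / (2 * Real.pi * u)

lemma rhoMP_intervalIntegrable : IntervalIntegrable rhoMP volume 0 4 := by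
  have hbase : IntervalIntegrable (fun x : ℝ => x ^ (-(1/2) : ℝ)) volume 0 4 :=
    intervalIntegral.intervalIntegrable_rpow' (by norm_num)
  have hbase' := hbase.const_mul (1 / Real.pi)
  refine hbase'.mono_fun' ?_ ?_
  · apply Measurable.aestronglyMeasurable
    unfold rhoMP
    fun_prop
  · rw [Set.uIoc_of_le (by norm_num : (0:ℝ) ≤ 4)]
    filter_upwards [ae_restrict_mem measurableSet_Ioc] with x hx
    obtain ⟨hx0, hx4⟩ := hx
    have hsx : 0 < Real.sqrt x := Real.sqrt_pos.2 hx0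
    have hx' : Real.sqrt x * Real.sqrt x = x := Real.mul_self_sqrt hx0.le
    have h1 : Real.sqrt (x * (4 - x)) ≤ 2 * Real.sqrt x := by
      calc Real.sqrt (x * (4 - x)) ≤ Real.sqrt (2 ^ 2 * x) :=
            Real.sqrt_le_sqrt (by nlinarith)
        _ = 2 * Real.sqrt x := by
            rw [Real.sqrt_mul (by positivity), Real.sqrt_sq (by norm_num)]
    have hrho_nonneg : 0 ≤ rhoMP x := by
      unfold rhoMP
      have : 0 < 2 * Real.pi * x := by positivity
      positivity
    have hrw : x ^ (-(1/2) : ℝ) = (Real.sqrt x)⁻¹ := by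
      rw [Real.rpow_neg hx0.le, ← Real.sqrt_eq_rpow]
    rw [Real.norm_of_nonneg hrho_nonneg, hrw]
    unfold rhoMP
    rw [div_le_iff₀ (by positivity)]
    have hπ := Real.pi_pos
    calc Real.sqrt (x * (4 - x)) ≤ 2 * Real.sqrt x := h1
      _ = 1 / Real.pi * (Real.sqrt x)⁻¹ * (2 * Real.pi * x) := by
          field_simp
          nlinarith [hx']

lemma hasDerivAt_F (L t u : ℝ) (hu0 : 0 < u) (hu4 : u < 4) :
    HasDerivAt (fun v => (L * (Real.sqrt (v * (4 - v)) + 2 * Real.arcsin ((v - 2) / 2)) - t * v)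
        / (2 * Real.pi))
      (L * rhoMP u - t / (2 * Real.pi)) u := by
  have hprod : 0 < u * (4 - u) := mul_pos hu0 (by linarith)
  set s := Real.sqrt (u * (4 - u)) with hs_def
  have hs : 0 < s := Real.sqrt_pos.2 hprod
  have hss : s * s = u * (4 - u) := Real.mul_self_sqrt hprod.le
  have h1 : HasDerivAt (fun v : ℝ => v * (4 - v)) (4 - 2 * u) u := by
    have := (hasDerivAt_id u).mul ((hasDerivAt_const u (4:ℝ)).sub (hasDerivAt_id u))
    refine this.congr_deriv ?_; symm
    simp; ring
  have h2 : HasDerivAt (fun v : ℝ => Real.sqrt (v * (4 - v)))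
      (1 / (2 * s) * (4 - 2 * u)) u := (Real.hasDerivAt_sqrt hprod.ne').comp u h1
  have h3 : HasDerivAt (fun v : ℝ => (v - 2) / 2) (1 / 2) u := by
    simpa using ((hasDerivAt_id u).sub_const 2).div_const 2
  have hm1 : (u - 2) / 2 ≠ -1 := by
    intro h
    have : u = 0 := by linarith [(div_eq_iff (two_ne_zero (α := ℝ))).1 h]
    exact hu0.ne' this
  have hp1 : (u - 2) / 2 ≠ 1 := by
    intro h
    have : u = 4 := by linarith [(div_eq_iff (two_ne_zero (α := ℝ))).1 h]
    exact hu4.ne this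
  have h4 : HasDerivAt (fun v : ℝ => Real.arcsin ((v - 2) / 2))
      (1 / Real.sqrt (1 - ((u - 2) / 2) ^ 2) * (1 / 2)) u :=
    HasDerivAt.comp (h₂ := Real.arcsin) u (Real.hasDerivAt_arcsin hm1 hp1) h3
  have hsq : Real.sqrt (1 - ((u - 2) / 2) ^ 2) = s / 2 := by
    have hsq2 : s ^ 2 = u * (4 - u) := by rw [sq]; exact hss
    have h' : 1 - ((u - 2) / 2) ^ 2 = (s / 2) ^ 2 := by
      linear_combination (-1/4 : ℝ) * hsq2
    rw [h', Real.sqrt_sq (by positivity)]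
  rw [hsq] at h4
  have h5 := (((h2.add (h4.const_mul 2)).const_mul L).sub ((hasDerivAt_id u).const_mul t)).div_const
      (2 * Real.pi)
  refine h5.congr_deriv ?_; symm
  unfold rhoMP
  rw [← hs_def]
  have hπ := Real.pi_pos
  field_simp
  linear_combination (2 * L) * hss

lemma arcsin_identity (s : ℝ) (hs : 0 < s) :
    Real.arcsin ((1 - s ^ 2) / (1 + s ^ 2)) = π / 2 - 2 * Real.arctan s := by
  have h1 : 0 < Real.arctan s := by
    have := Real.arctan_strictMono hs
    simpa [Real.arctan_zero] using this
  have h2 : Real.arctan s < π / 2 := Real.arctan_lt_pi_div_two s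
  have h1s : (0:ℝ) < 1 + s ^ 2 := by positivity
  have hcos : Real.cos (2 * Real.arctan s) = (1 - s ^ 2) / (1 + s ^ 2) := by
    rw [Real.cos_two_mul, Real.cos_arctan, div_pow, one_pow, Real.sq_sqrt h1s.le]
    field_simp
    ring
  have hsin : (1 - s ^ 2) / (1 + s ^ 2) = Real.sin (π / 2 - 2 * Real.arctan s) := by
    rw [Real.sin_pi_div_two_sub, hcos]
  rw [hsin, Real.arcsin_sin (by linarith) (by linarith)]

private theorem lue_main (L t : ℝ) (hL : 0 < L) (ht : 0 < t)
    (rhoMP_intervalIntegrable : IntervalIntegrable rhoMP volume 0 4)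
    (hasDerivAt_F : ∀ (u : ℝ), 0 < u → u < 4 →
      HasDerivAt (fun v => (L * (Real.sqrt (v * (4 - v)) + 2 * Real.arcsin ((v - 2) / 2)) - t * v)
        / (2 * Real.pi)) (L * rhoMP u - t / (2 * Real.pi)) u)
    (arcsin_identity : ∀ s : ℝ, 0 < s →
      Real.arcsin ((1 - s ^ 2) / (1 + s ^ 2)) = π / 2 - 2 * Real.arctan s) :
    (∫ u in (0:ℝ)..4, max (L * rhoMP u - t / (2 * Real.pi)) 0)
        = (2 * L / Real.pi) * Real.arctan (L / t) ∧
    (∫ u in (0:ℝ)..4, max (L * rhoMP u - t / (2 * Real.pi)) 0)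
        = L - (2 * L / Real.pi) * Real.arctan (t / L) := by
  have hπ := Real.pi_pos
  have hD : (0:ℝ) < L ^ 2 + t ^ 2 := by positivity
  set c : ℝ := 4 * L ^ 2 / (L ^ 2 + t ^ 2) with hc_def
  have hc0 : 0 < c := by positivity
  have hc4 : c < 4 := by rw [hc_def, div_lt_iff₀ hD]; nlinarith
  -- sign of the integrand
  have hsign_le : ∀ u ∈ Set.Ioc (0:ℝ) c, 0 ≤ L * rhoMP u - t / (2 * Real.pi) := by
    rintro u ⟨hu0, huc⟩
    have hu4 : u < 4 := huc.trans_lt hc4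
    have hprod : (0:ℝ) ≤ u * (4 - u) := by nlinarith
    have hcle : u * (L ^ 2 + t ^ 2) ≤ 4 * L ^ 2 := by
      rw [hc_def] at huc
      calc u * (L ^ 2 + t ^ 2) ≤ (4 * L ^ 2 / (L ^ 2 + t ^ 2)) * (L ^ 2 + t ^ 2) := by
            apply mul_le_mul_of_nonneg_right huc hD.le
        _ = 4 * L ^ 2 := by field_simp
    have hkey : t * u ≤ L * Real.sqrt (u * (4 - u)) := by
      have h1 : (t * u) ^ 2 ≤ (L * Real.sqrt (u * (4 - u))) ^ 2 := by
        rw [mul_pow, mul_pow, Real.sq_sqrt hprod]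
        nlinarith
      calc t * u = Real.sqrt ((t * u) ^ 2) := (Real.sqrt_sq (by positivity)).symm
        _ ≤ Real.sqrt ((L * Real.sqrt (u * (4 - u))) ^ 2) := Real.sqrt_le_sqrt h1
        _ = L * Real.sqrt (u * (4 - u)) := Real.sqrt_sq (by positivity)
    rw [sub_nonneg]
    unfold rhoMP
    rw [mul_div_assoc' L _ _, div_le_div_iff₀ (by positivity) (by positivity)]
    nlinarith [hkey, Real.pi_pos]
  have hsign_ge : ∀ u ∈ Set.Ioc c 4, L * rhoMP u - t / (2 * Real.pi) ≤ 0 := by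
    rintro u ⟨huc, hu4⟩
    have hu0 : 0 < u := hc0.trans huc
    have hprod : (0:ℝ) ≤ u * (4 - u) := by nlinarith
    have hcge : 4 * L ^ 2 ≤ u * (L ^ 2 + t ^ 2) := by
      rw [hc_def] at huc
      have := mul_le_mul_of_nonneg_right huc.le hD.le
      calc 4 * L ^ 2 = (4 * L ^ 2 / (L ^ 2 + t ^ 2)) * (L ^ 2 + t ^ 2) := by field_simp
        _ ≤ u * (L ^ 2 + t ^ 2) := this
    have hkey : L * Real.sqrt (u * (4 - u)) ≤ t * u := by
      have h1 : (L * Real.sqrt (u * (4 - u))) ^ 2 ≤ (t * u) ^ 2 := by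
        rw [mul_pow, mul_pow, Real.sq_sqrt hprod]
        nlinarith
      calc L * Real.sqrt (u * (4 - u)) = Real.sqrt ((L * Real.sqrt (u * (4 - u))) ^ 2) :=
            (Real.sqrt_sq (by positivity)).symm
        _ ≤ Real.sqrt ((t * u) ^ 2) := Real.sqrt_le_sqrt h1
        _ = t * u := Real.sqrt_sq (by positivity)
    rw [sub_nonpos]
    unfold rhoMP
    rw [mul_div_assoc' L _ _, div_le_div_iff₀ (by positivity) (by positivity)]
    nlinarith [hkey, Real.pi_pos]
  -- integrability
  have hg4 : IntervalIntegrable (fun u => L * rhoMP u - t / (2 * Real.pi)) volume 0 4 :=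
    (rhoMP_intervalIntegrable.const_mul L).sub intervalIntegrable_const
  have hsub1 : IntervalIntegrable (fun u => L * rhoMP u - t / (2 * Real.pi)) volume 0 c := by
    refine hg4.mono_set' ?_
    rw [Set.uIoc_of_le hc0.le, Set.uIoc_of_le (by norm_num : (0:ℝ) ≤ 4)]
    exact Set.Ioc_subset_Ioc le_rfl hc4.le
  have hsub2 : IntervalIntegrable (fun u => L * rhoMP u - t / (2 * Real.pi)) volume c 4 := by
    refine hg4.mono_set' ?_
    rw [Set.uIoc_of_le hc4.le, Set.uIoc_of_le (by norm_num : (0:ℝ) ≤ 4)]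
    exact Set.Ioc_subset_Ioc hc0.le le_rfl
  have hmax1 : IntervalIntegrable (fun u => max (L * rhoMP u - t / (2 * Real.pi)) 0) volume 0 c :=
    ⟨hsub1.1.pos_part, hsub1.2.pos_part⟩
  have hmax2 : IntervalIntegrable (fun u => max (L * rhoMP u - t / (2 * Real.pi)) 0) volume c 4 :=
    ⟨hsub2.1.pos_part, hsub2.2.pos_part⟩
  have hsplit := intervalIntegral.integral_add_adjacent_intervals hmax1 hmax2
  -- the two pieces
  have h1 : (∫ u in (0:ℝ)..c, max (L * rhoMP u - t / (2 * Real.pi)) 0)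
      = ∫ u in (0:ℝ)..c, (L * rhoMP u - t / (2 * Real.pi)) := by
    rw [intervalIntegral.integral_of_le hc0.le, intervalIntegral.integral_of_le hc0.le]
    exact setIntegral_congr_fun measurableSet_Ioc fun u hu => max_eq_left (hsign_le u hu)
  have h2 : (∫ u in c..4, max (L * rhoMP u - t / (2 * Real.pi)) 0) = 0 := by
    rw [intervalIntegral.integral_of_le hc4.le]
    have := setIntegral_congr_fun (μ := volume) measurableSet_Ioc
      (g := fun _ : ℝ => (0:ℝ)) (fun u hu => max_eq_right (hsign_ge u hu))
    simpa using this
  -- FTC on [0, c]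
  set F : ℝ → ℝ := fun u =>
    (L * (Real.sqrt (u * (4 - u)) + 2 * Real.arcsin ((u - 2) / 2)) - t * u) / (2 * Real.pi)
    with hF_def
  have hcont : ContinuousOn F (Set.Icc 0 c) := by
    apply Continuous.continuousOn
    rw [hF_def]
    exact ((continuous_const.mul ((Real.continuous_sqrt.comp (by fun_prop)).add
      (continuous_const.mul (Real.continuous_arcsin.comp (by fun_prop))))).sub
      (continuous_const.mul continuous_id)).div_const _
  have hderiv : ∀ x ∈ Set.Ioo (0:ℝ) c, HasDerivWithinAt F
      (L * rhoMP x - t / (2 * Real.pi)) (Set.Ioi x) x :=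
    fun x hx => (hasDerivAt_F x hx.1 (hx.2.trans hc4)).hasDerivWithinAt
  have h3 : (∫ u in (0:ℝ)..c, (L * rhoMP u - t / (2 * Real.pi))) = F c - F 0 :=
    intervalIntegral.integral_eq_sub_of_hasDeriv_right_of_le hc0.le hcont hderiv hsub1
  -- endpoint values
  have hF0 : F 0 = -(L / 2) := by
    rw [hF_def]
    simp only
    rw [show ((0:ℝ) - 2) / 2 = -1 by norm_num]
    rw [Real.arcsin_neg_one]
    simp [Real.sqrt_zero]
    field_simp
  have hsc : Real.sqrt (c * (4 - c)) = 4 * L * t / (L ^ 2 + t ^ 2) := by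
    have h : c * (4 - c) = (4 * L * t / (L ^ 2 + t ^ 2)) ^ 2 := by
      rw [hc_def]; field_simp; ring
    rw [h, Real.sqrt_sq (by positivity)]
  have hxc : (c - 2) / 2 = (1 - (t / L) ^ 2) / (1 + (t / L) ^ 2) := by
    rw [hc_def]; field_simp; ring
  have harc : Real.arcsin ((c - 2) / 2) = π / 2 - 2 * Real.arctan (t / L) := by
    rw [hxc]; exact arcsin_identity _ (div_pos ht hL)
  have hFc : F c = L / 2 - (2 * L / π) * Real.arctan (t / L) := by
    rw [hF_def]
    simp only
    rw [hsc, harc, hc_def]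
    field_simp
    ring
  have hval : (∫ u in (0:ℝ)..4, max (L * rhoMP u - t / (2 * Real.pi)) 0)
      = L - (2 * L / Real.pi) * Real.arctan (t / L) := by
    rw [← hsplit, h1, h2, h3, hFc, hF0]
    ring
  refine ⟨?_, hval⟩
  rw [hval, show L / t = (t / L)⁻¹ by rw [inv_div],
    Real.arctan_inv_of_pos (div_pos ht hL)]
  field_simp

/-- Refined connected two-point form factor integral for the LUE:
for `L > 0` and `t > 0`,
`∫₀⁴ max(Lρ(u) − t/(2π), 0) du = (2L/π) arctan(L/t) = L − (2L/π) arctan(t/L)`. -/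
theorem lue_refined_form_factor_integral (L t : ℝ) (hL : 0 < L) (ht : 0 < t) :
    (∫ u in (0:ℝ)..4, max (L * rhoMP u - t / (2 * Real.pi)) 0)
        = (2 * L / Real.pi) * Real.arctan (L / t) ∧
    (∫ u in (0:ℝ)..4, max (L * rhoMP u - t / (2 * Real.pi)) 0)
        = L - (2 * L / Real.pi) * Real.arctan (t / L) :=
  lue_main L t hL ht rhoMP_intervalIntegrable
    (fun u h1 h2 => hasDerivAt_F L t u h1 h2) arcsin_identity
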